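/- In a finite probability model with variables Y (real-valued), U, Z, A, X, suppose E[Y|Z,a,x] = E[Y|U,a,x]·P(U|Z,a,x) and P(W|Z,a,x) = P(W|U,x)·P(U|Z,a,x) hold as matrix/vector identities, where P(W|U,x) has a left inverse P(W|U,x)⁺ and P(U|Z,a,x) has a right inverse P(U|Z,a,x)⁺. Then E[Y(a)|x] := E[Y|U,a,x]·P(U|x) = h(a,x)·P(W|x) for any row vector h(a,x) satisfying E[Y|Z,a,x] = h(a,x)·P(W|Z,a,x), where P(U|x) and P(W|x) are the marginal probability column vectors satisfying P(W|x) = P(W|U,x)·P(U|x). -/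
import Mathlib

open Matrix

/-- Identification chain of Lemma 1: with `B = P(W|U,x)` left-invertible,
`C = P(U|Z,a,x)` right-invertible, `u = E[Y|U,a,x]`, `pU = P(U|x)`, and
`pW = P(W|x) = B *ᵥ pU`, any row vector `h` solving `u ᵥ* C = h ᵥ* (B * C)`
satisfies `u ⬝ᵥ pU = h ⬝ᵥ pW`. -/
theorem identification_chain {nW nU nZ : ℕ}
    (B : Matrix (Fin nW) (Fin nU) ℝ) (Bplus : Matrix (Fin nU) (Fin nW) ℝ)
    (hB : Bplus * B = 1)
    (C : Matrix (Fin nU) (Fin nZ) ℝ) (Cplus : Matrix (Fin nZ) (Fin nU) ℝ)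
    (hC : C * Cplus = 1)
    (u : Fin nU → ℝ)
    (pU : Fin nU → ℝ) (pW : Fin nW → ℝ)
    (hpW : pW = B.mulVec pU)
    (h : Fin nW → ℝ)
    (hh : Matrix.vecMul u C = Matrix.vecMul h (B * C)) :
    u ⬝ᵥ pU = h ⬝ᵥ pW := by
  have key : u = Matrix.vecMul h B := by
    have := congrArg (fun v => Matrix.vecMul v Cplus) hh
    simpa [Matrix.vecMul_vecMul, Matrix.mul_assoc, hC] using this
  rw [key, hpW, Matrix.dotProduct_mulVec]
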